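/- arXiv:math/0406401 — 2 statements merged into one kernel-verified Lean document; each statement's English description precedes it below -/
import Mathlib

section
/- For all integers q, r ≥ 2, the linear Euler sum satisfies S_{r,q} = ζ(r)ζ(q) - ((-1)^{r-1}/(r-1)!) ∫₀¹ log^{r-1}(x) Li_q(x) / (1-x) dx. -/
open MeasureTheory

/-- Polylogarithm `Li n x = ∑_{k ≥ 1} x^k / k^n` (for an integer index `n`). -/
noncomputable def Li (n : ℤ) (x : ℝ) : ℝ := ∑' k : ℕ+, x ^ (k : ℕ) / ((k : ℕ) : ℝ) ^ n

/-- Zeta value `ζ(n) = ∑_{k ≥ 1} 1 / k^n` (equals `0` at `n = 1` by divergence). -/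
noncomputable def zetaR (n : ℕ) : ℝ := ∑' k : ℕ+, 1 / ((k : ℕ) : ℝ) ^ n

/-- The set of zeta values at integers `n ≥ 2`. -/
def zetaValues : Set ℝ := {x : ℝ | ∃ n : ℕ, 2 ≤ n ∧ x = zetaR n}

open Set Filter

lemma cont_pow_log (m p : ℕ) (hm : 1 ≤ m) :
    ContinuousOn (fun x : ℝ => x ^ m * Real.log x ^ p) (Set.Icc 0 1) := by
  intro x hx
  rcases eq_or_ne x 0 with rfl | hx0
  · have h0 : (fun x : ℝ => x ^ m * Real.log x ^ p) 0 = 0 := by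
      simp [zero_pow (by omega : m ≠ 0)]
    have h0' : (0:ℝ) ^ m * Real.log 0 ^ p = 0 := by
      simp [zero_pow (by omega : m ≠ 0)]
    rw [ContinuousWithinAt, h0']
    have hsub : Set.Icc (0:ℝ) 1 ⊆ insert 0 (Set.Ioi 0) := by
      intro y hy
      rcases eq_or_ne y 0 with rfl | h
      · exact Set.mem_insert _ _
      · exact Set.mem_insert_of_mem _ (lt_of_le_of_ne hy.1 (Ne.symm h))
    refine Filter.Tendsto.mono_left ?_ (nhdsWithin_mono _ hsub)
    rw [nhdsWithin_insert]
    refine Filter.Tendsto.sup ?_ ?_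
    · simpa [zero_pow (by omega : m ≠ 0)] using tendsto_pure_nhds (fun x : ℝ => x ^ m * Real.log x ^ p) 0
    · rcases Nat.eq_zero_or_pos p with rfl | hp
      · simp only [pow_zero, mul_one]
        have : Filter.Tendsto (fun x : ℝ => x ^ m) (nhds 0) (nhds 0) := by
          simpa [zero_pow (by omega : m ≠ 0)] using
            (continuous_pow m).tendsto (0:ℝ)
        exact this.mono_left nhdsWithin_le_nhds
      · have hmp : (0:ℝ) < (m:ℝ) / (p:ℝ) := by
          apply div_pos <;> [exact_mod_cast hm; exact_mod_cast hp]
        have h := (tendsto_log_mul_rpow_nhdsGT_zero hmp).pow p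
        rw [zero_pow (by omega : p ≠ 0)] at h
        refine h.congr' ?_
        filter_upwards [self_mem_nhdsWithin] with y hy
        have hy0 : (0:ℝ) < y := hy
        rw [mul_pow, ← Real.rpow_natCast (y ^ ((m:ℝ)/(p:ℝ))) p, ← Real.rpow_mul hy0.le,
          div_mul_cancel₀, Real.rpow_natCast]
        · ring
        · exact_mod_cast (by omega : p ≠ 0)
  · have hx1 : (0:ℝ) < x := lt_of_le_of_ne hx.1 (Ne.symm hx0)
    exact ((continuous_pow m).continuousAt.mul
      ((Real.continuousAt_log hx0).pow p)).continuousWithinAt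

lemma intble_pow_log (m p : ℕ) (hm : 1 ≤ m) :
    IntervalIntegrable (fun x : ℝ => x ^ m * Real.log x ^ p) volume 0 1 := by
  apply ContinuousOn.intervalIntegrable
  rw [Set.uIcc_of_le zero_le_one]
  exact cont_pow_log m p hm

lemma J_val (m p : ℕ) (hm : 1 ≤ m) :
    ∫ x in (0:ℝ)..1, x ^ m * Real.log x ^ p
      = (-1) ^ p * (p.factorial : ℝ) / ((m:ℝ) + 1) ^ (p + 1) := by
  induction p with
  | zero => simp [integral_pow]
  | succ p ih =>
    have hm1 : ((m:ℝ) + 1) ≠ 0 := by positivity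
    have hder : ∀ x ∈ Set.Ioo (0:ℝ) 1,
        HasDerivAt (fun x : ℝ => x ^ (m+1) * Real.log x ^ (p+1))
          (((m:ℝ)+1) * (x ^ m * Real.log x ^ (p+1)) + ((p:ℝ)+1) * (x ^ m * Real.log x ^ p)) x := by
      intro x hx
      have h1 : HasDerivAt (fun x : ℝ => x ^ (m+1)) (((m:ℝ)+1) * x ^ m) x := by
        simpa using hasDerivAt_pow (m+1) x
      have h2 : HasDerivAt (fun x : ℝ => Real.log x ^ (p+1))
          (((p:ℝ)+1) * Real.log x ^ p * x⁻¹) x := by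
        simpa using (Real.hasDerivAt_log hx.1.ne').fun_pow (p+1)
      have := h1.mul h2
      refine this.congr_deriv ?_
      have hx0 : x ≠ 0 := hx.1.ne'
      have hxm : x ^ (m+1) * x⁻¹ = x ^ m := by rw [pow_succ, mul_assoc, mul_inv_cancel₀ hx0, mul_one]
      linear_combination (((p:ℝ)+1) * Real.log x ^ p) * hxm
    have hint : IntervalIntegrable (fun x : ℝ =>
        ((m:ℝ)+1) * (x ^ m * Real.log x ^ (p+1)) + ((p:ℝ)+1) * (x ^ m * Real.log x ^ p))
        volume 0 1 :=
      ((intble_pow_log m (p+1) hm).const_mul _).add ((intble_pow_log m p hm).const_mul _)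
    have heq := intervalIntegral.integral_eq_sub_of_hasDerivAt_of_le zero_le_one
      (cont_pow_log (m+1) (p+1) (by omega)) hder hint
    rw [intervalIntegral.integral_add ((intble_pow_log m (p+1) hm).const_mul _)
      ((intble_pow_log m p hm).const_mul _), intervalIntegral.integral_const_mul,
      intervalIntegral.integral_const_mul, ih] at heq
    simp only [Real.log_one, zero_pow (by omega : p + 1 ≠ 0), one_pow, mul_zero,
      zero_pow (by omega : m + 1 ≠ 0), zero_mul, sub_zero, mul_zero, sub_self] at heq
    -- heq : (m+1) * ∫ + (p+1) * ((-1)^p * p! / (m+1)^(p+1)) = 0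
    have : ∫ x in (0:ℝ)..1, x ^ m * Real.log x ^ (p+1)
        = -(((p:ℝ)+1) * ((-1) ^ p * (p.factorial : ℝ) / ((m:ℝ)+1) ^ (p+1))) / ((m:ℝ)+1) := by
      field_simp at heq ⊢
      linarith
    rw [this, Nat.factorial_succ]
    push_cast
    field_simp
    ring

lemma pnat_tsum_eq (f : ℕ+ → ℝ) : ∑' k : ℕ+, f k = ∑' i : ℕ, f i.succPNat :=
  (Equiv.tsum_eq Equiv.pnatEquivNat.symm f).symm

lemma zetaR_eq (n : ℕ) : zetaR n = ∑' i : ℕ, 1 / ((i:ℝ) + 1) ^ n := by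
  rw [zetaR, pnat_tsum_eq]
  refine tsum_congr fun i => ?_
  simp [Nat.succPNat]

lemma summable_base {n : ℕ} (hn : 2 ≤ n) : Summable (fun i : ℕ => 1 / ((i:ℝ) + 1) ^ n) := by
  have h := Real.summable_one_div_nat_pow.mpr (by omega : 1 < n)
  have := (summable_nat_add_iff (f := fun i : ℕ => 1 / (i:ℝ) ^ n) 1).mpr h
  refine this.congr fun i => ?_
  push_cast
  ring

lemma Li_eq (n : ℕ) (x : ℝ) : Li n x = ∑' i : ℕ, x ^ (i+1) / ((i:ℝ) + 1) ^ n := by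
  rw [Li, pnat_tsum_eq]
  refine tsum_congr fun i => ?_
  simp [Nat.succPNat]

lemma H_eq (r n : ℕ) : ∑ k ∈ Finset.Icc 1 n, (1:ℝ) / (k:ℝ) ^ r
    = ∑ i ∈ Finset.range n, 1 / ((i:ℝ) + 1) ^ r := by
  rw [← Finset.Ico_add_one_right_eq_Icc, Finset.sum_Ico_eq_sum_range]
  refine Finset.sum_congr rfl fun i _ => ?_
  push_cast
  ring

lemma tail_eq {r : ℕ} (hr : 2 ≤ r) (n : ℕ) :
    ∑' j : ℕ, 1 / ((j:ℝ) + (n:ℝ) + 1) ^ r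
      = zetaR r - ∑ k ∈ Finset.Icc 1 n, (1:ℝ) / (k:ℝ) ^ r := by
  have h := Summable.sum_add_tsum_nat_add (f := fun i : ℕ => 1 / ((i:ℝ) + 1) ^ r) n (summable_base hr)
  rw [zetaR_eq, H_eq]
  have h2 : ∑' j : ℕ, 1 / ((j:ℝ) + (n:ℝ) + 1) ^ r
      = ∑' j : ℕ, 1 / (((j + n : ℕ):ℝ) + 1) ^ r := by
    refine tsum_congr fun j => ?_
    push_cast
    ring_nf
  rw [h2]
  linarith [h]

lemma H_le {r : ℕ} (hr : 2 ≤ r) (n : ℕ) :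
    ∑ k ∈ Finset.Icc 1 n, (1:ℝ) / (k:ℝ) ^ r ≤ zetaR r := by
  rw [H_eq, zetaR_eq]
  exact Summable.sum_le_tsum _ (fun i _ => by positivity) (summable_base hr)

lemma H_nonneg (r n : ℕ) : 0 ≤ ∑ k ∈ Finset.Icc 1 n, (1:ℝ) / (k:ℝ) ^ r :=
  Finset.sum_nonneg fun k _ => by positivity

noncomputable def Dterm (r q : ℕ) (z : ℕ × ℕ) : ℝ :=
  (1 / ((z.1:ℝ) + 1) ^ q) * (1 / ((z.2:ℝ) + (z.1:ℝ) + 2) ^ r)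

lemma Dterm_nonneg (r q : ℕ) : 0 ≤ Dterm r q := fun z => by
  unfold Dterm; positivity

lemma Dfib_summable {r : ℕ} (hr : 2 ≤ r) (q n : ℕ) :
    Summable fun j => Dterm r q (n, j) := by
  have h := (summable_nat_add_iff (f := fun i : ℕ => 1 / ((i:ℝ) + 1) ^ r) (n+1)).mpr
    (summable_base hr)
  refine ((h.mul_left (1 / ((n:ℝ) + 1) ^ q)).congr fun j => ?_)
  unfold Dterm
  push_cast
  ring_nf

lemma Dfib_val {r : ℕ} (hr : 2 ≤ r) (q n : ℕ) :
    ∑' j, Dterm r q (n, j)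
      = (1 / ((n:ℝ) + 1) ^ q) * (zetaR r - ∑ k ∈ Finset.Icc 1 (n+1), (1:ℝ) / (k:ℝ) ^ r) := by
  rw [← tail_eq hr (n+1)]
  rw [← tsum_mul_left]
  refine tsum_congr fun j => ?_
  unfold Dterm
  push_cast
  ring_nf

lemma Dcol_summable {r q : ℕ} (hr : 2 ≤ r) (hq : 2 ≤ q) :
    Summable fun n => ∑' j, Dterm r q (n, j) := by
  refine Summable.of_nonneg_of_le (fun n => ?_) (fun n => ?_)
    ((summable_base hq).mul_right (zetaR r))
  · exact tsum_nonneg fun j => Dterm_nonneg r q _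
  · rw [Dfib_val hr]
    have h1 : (0:ℝ) ≤ 1 / ((n:ℝ) + 1) ^ q := by positivity
    have h2 : zetaR r - ∑ k ∈ Finset.Icc 1 (n+1), (1:ℝ) / (k:ℝ) ^ r ≤ zetaR r := by
      linarith [H_nonneg r (n+1)]
    have h3 : (0:ℝ) ≤ zetaR r := by
      rw [zetaR_eq]; exact tsum_nonneg fun i => by positivity
    exact mul_le_mul_of_nonneg_left h2 h1 |>.trans (le_of_eq rfl)

lemma D_summable {r q : ℕ} (hr : 2 ≤ r) (hq : 2 ≤ q) : Summable (Dterm r q) :=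
  (summable_prod_of_nonneg (Dterm_nonneg r q)).mpr
    ⟨fun n => Dfib_summable hr q n, Dcol_summable hr hq⟩

lemma partA {r q : ℕ} (hr : 2 ≤ r) (hq : 2 ≤ q) :
    zetaR r * zetaR q
      - ∑' n : ℕ+, (∑ k ∈ Finset.Icc 1 (n : ℕ), (1 : ℝ) / (k : ℝ) ^ r) / ((n : ℕ) : ℝ) ^ q
      = ∑' z, Dterm r q z := by
  have hSnat : ∑' n : ℕ+, (∑ k ∈ Finset.Icc 1 (n : ℕ), (1 : ℝ) / (k : ℝ) ^ r) / ((n : ℕ) : ℝ) ^ q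
      = ∑' n : ℕ, (∑ k ∈ Finset.Icc 1 (n+1), (1 : ℝ) / (k : ℝ) ^ r) * (1 / ((n:ℝ) + 1) ^ q) := by
    rw [pnat_tsum_eq]
    refine tsum_congr fun n => ?_
    simp [Nat.succPNat]
    push_cast
    ring
  have hzz : zetaR r * zetaR q = ∑' n : ℕ, zetaR r * (1 / ((n:ℝ) + 1) ^ q) := by
    rw [tsum_mul_left, ← zetaR_eq]
  have hS_sum : Summable fun n : ℕ =>
      (∑ k ∈ Finset.Icc 1 (n+1), (1 : ℝ) / (k : ℝ) ^ r) * (1 / ((n:ℝ) + 1) ^ q) := by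
    refine Summable.of_nonneg_of_le (fun n => ?_) (fun n => ?_)
      ((summable_base hq).mul_left (zetaR r))
    · exact mul_nonneg (H_nonneg r (n+1)) (by positivity)
    · exact mul_le_mul_of_nonneg_right (H_le hr (n+1)) (by positivity)
  have hzz_sum : Summable fun n : ℕ => zetaR r * (1 / ((n:ℝ) + 1) ^ q) :=
    (summable_base hq).mul_left _
  rw [hSnat, hzz, ← Summable.tsum_sub hzz_sum hS_sum,
    Summable.tsum_prod' (D_summable hr hq) (fun n => Dfib_summable hr q n)]
  refine tsum_congr fun n => ?_
  rw [Dfib_val hr]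
  ring

lemma normJ (m p : ℕ) (hm : 1 ≤ m) :
    ∫ x in Set.Ioc (0:ℝ) 1, |x ^ m * Real.log x ^ p|
      = (p.factorial : ℝ) / ((m:ℝ) + 1) ^ (p + 1) := by
  have habs : ∀ x ∈ Set.Ioc (0:ℝ) 1,
      |x ^ m * Real.log x ^ p| = (-1:ℝ) ^ p * (x ^ m * Real.log x ^ p) := by
    intro x hx
    rw [abs_mul, abs_pow, abs_pow, abs_of_pos hx.1,
      abs_of_nonpos (Real.log_nonpos hx.1.le hx.2)]
    ring
  rw [setIntegral_congr_fun measurableSet_Ioc habs, MeasureTheory.integral_const_mul,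
    ← intervalIntegral.integral_of_le zero_le_one, J_val m p hm]
  have h4 : ((-1:ℝ)) ^ p * ((-1:ℝ) ^ p * (p.factorial:ℝ) / (((m:ℝ)+1) ^ (p+1)))
      = ((-1:ℝ) ^ p * (-1:ℝ) ^ p) * (p.factorial:ℝ) / (((m:ℝ)+1) ^ (p+1)) := by ring
  rw [h4, ← mul_pow]
  norm_num

lemma G_integrable (q p : ℕ) (z : ℕ × ℕ) :
    IntegrableOn (fun x : ℝ =>
      (1 / ((z.1:ℝ) + 1) ^ q) * (x ^ (z.1 + 1 + z.2) * Real.log x ^ p))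
      (Set.Ioc (0:ℝ) 1) volume := by
  exact (((cont_pow_log (z.1 + 1 + z.2) p (by omega)).integrableOn_Icc).mono_set
    Set.Ioc_subset_Icc_self).const_mul _

lemma G_norm_int (q p : ℕ) (z : ℕ × ℕ) :
    ∫ x in Set.Ioc (0:ℝ) 1,
        ‖(1 / ((z.1:ℝ) + 1) ^ q) * (x ^ (z.1 + 1 + z.2) * Real.log x ^ p)‖
      = (1 / ((z.1:ℝ) + 1) ^ q)
          * ((p.factorial : ℝ) / ((z.2:ℝ) + (z.1:ℝ) + 2) ^ (p + 1)) := by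
  have h : ∀ x : ℝ, ‖(1 / ((z.1:ℝ) + 1) ^ q) * (x ^ (z.1 + 1 + z.2) * Real.log x ^ p)‖
      = (1 / ((z.1:ℝ) + 1) ^ q) * |x ^ (z.1 + 1 + z.2) * Real.log x ^ p| := by
    intro x
    rw [Real.norm_eq_abs, abs_mul, abs_of_nonneg (by positivity :
      (0:ℝ) ≤ 1 / ((z.1:ℝ) + 1) ^ q)]
  simp only [h]
  rw [MeasureTheory.integral_const_mul, normJ _ p (by omega)]
  congr 2
  push_cast
  ring

lemma G_int (q p : ℕ) (z : ℕ × ℕ) :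
    ∫ x in Set.Ioc (0:ℝ) 1,
        (1 / ((z.1:ℝ) + 1) ^ q) * (x ^ (z.1 + 1 + z.2) * Real.log x ^ p)
      = (1 / ((z.1:ℝ) + 1) ^ q)
          * ((-1:ℝ) ^ p * (p.factorial : ℝ) / ((z.2:ℝ) + (z.1:ℝ) + 2) ^ (p + 1)) := by
  rw [MeasureTheory.integral_const_mul, ← intervalIntegral.integral_of_le zero_le_one,
    J_val _ p (by omega)]
  congr 2
  push_cast
  ring

lemma pointwise (q p : ℕ) (hp : 1 ≤ p) {x : ℝ} (hx : x ∈ Set.Ioc (0:ℝ) 1) :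
    Real.log x ^ p * Li q x / (1 - x)
      = ∑' z : ℕ × ℕ, (1 / ((z.1:ℝ) + 1) ^ q) * (x ^ (z.1 + 1 + z.2) * Real.log x ^ p) := by
  rcases eq_or_lt_of_le hx.2 with rfl | hlt
  · simp [Real.log_one, zero_pow (by omega : p ≠ 0)]
  · have hx0 : 0 < x := hx.1
    have hgeo : Summable fun j : ℕ => x ^ j := summable_geometric_of_lt_one hx0.le hlt
    have hLi_sum : Summable fun n : ℕ => x ^ (n+1) / ((n:ℝ) + 1) ^ q := by
      refine Summable.of_nonneg_of_le (fun n => by positivity) (fun n => ?_)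
        (hgeo.mul_left x |>.congr fun n => by rw [← pow_succ'])
      exact div_le_self (by positivity) (one_le_pow₀ (by linarith [Nat.cast_nonneg (α := ℝ) n]))
    have hprod : Summable fun z : ℕ × ℕ => (x ^ (z.1+1) / ((z.1:ℝ) + 1) ^ q) * x ^ z.2 :=
      hLi_sum.mul_of_nonneg hgeo (fun n => by positivity) (fun j => by positivity)
    have key := Summable.tsum_mul_tsum hLi_sum hgeo hprod
    rw [mul_div_assoc, Li_eq, div_eq_mul_inv, ← tsum_geometric_of_lt_one hx0.le hlt, key,
      ← tsum_mul_left]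
    refine tsum_congr fun z => ?_
    rw [pow_add, pow_add]
    field_simp
    ring

/-- For all integers `q, r ≥ 2`, the linear Euler sum satisfies
`S_{r,q} = ζ(r)ζ(q) - ((-1)^(r-1)/(r-1)!) ∫₀¹ log^(r-1)(x) Li_q(x) / (1-x) dx`. -/
theorem stmt4 (r q : ℕ) (hr : 2 ≤ r) (hq : 2 ≤ q) :
    ∑' n : ℕ+, (∑ k ∈ Finset.Icc 1 (n : ℕ), (1 : ℝ) / (k : ℝ) ^ r) / ((n : ℕ) : ℝ) ^ q
      = zetaR r * zetaR q
        - ((-1) ^ (r - 1) / ((r - 1).factorial : ℝ))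
            * ∫ x in (0:ℝ)..1, Real.log x ^ (r - 1) * Li q x / (1 - x) := by
  obtain ⟨p, rfl⟩ : ∃ p, r = p + 1 := ⟨r - 1, by omega⟩
  have hp : 1 ≤ p := by omega
  simp only [Nat.add_sub_cancel]
  have hInt : ∀ z : ℕ × ℕ, Integrable (fun x : ℝ =>
      (1 / ((z.1:ℝ) + 1) ^ q) * (x ^ (z.1 + 1 + z.2) * Real.log x ^ p))
      (volume.restrict (Set.Ioc (0:ℝ) 1)) := fun z => G_integrable q p z
  have hNorm : Summable fun z : ℕ × ℕ => ∫ x in Set.Ioc (0:ℝ) 1,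
      ‖(1 / ((z.1:ℝ) + 1) ^ q) * (x ^ (z.1 + 1 + z.2) * Real.log x ^ p)‖ := by
    refine ((D_summable hr hq).mul_left (p.factorial : ℝ)).congr fun z => ?_
    rw [G_norm_int]
    unfold Dterm
    ring
  have key := integral_tsum_of_summable_integral_norm hInt hNorm
  have hIoc : ∫ x in (0:ℝ)..1, Real.log x ^ p * Li q x / (1 - x)
      = (-1:ℝ) ^ p * (p.factorial : ℝ) * ∑' z, Dterm (p+1) q z := by
    rw [intervalIntegral.integral_of_le zero_le_one,
      setIntegral_congr_fun measurableSet_Ioc (fun x hx => pointwise q p hp hx), ← key,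
      ← tsum_mul_left]
    refine tsum_congr fun z => ?_
    rw [G_int]
    unfold Dterm
    ring
  rw [hIoc]
  have hfac : (p.factorial : ℝ) ≠ 0 := by exact_mod_cast p.factorial_ne_zero
  have hsq : (-1:ℝ) ^ p * (-1:ℝ) ^ p = 1 := by rw [← mul_pow]; norm_num
  have hco : (-1:ℝ) ^ p / (p.factorial : ℝ)
      * ((-1:ℝ) ^ p * (p.factorial : ℝ) * ∑' z, Dterm (p+1) q z)
      = ∑' z, Dterm (p+1) q z := by
    have h5 : (-1:ℝ) ^ p / (p.factorial : ℝ)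
        * ((-1:ℝ) ^ p * (p.factorial : ℝ) * ∑' z, Dterm (p+1) q z)
        = ((-1:ℝ) ^ p * (-1:ℝ) ^ p) * ((p.factorial : ℝ) / (p.factorial : ℝ))
          * ∑' z, Dterm (p+1) q z := by ring
    rw [h5, hsq, div_self hfac]
    ring
  rw [hco]
  linarith [partA hr hq]
end

section
/- For every integer q ≥ 2, the integrals J(-2,1,q) = ∫₀¹ x^{-2} Li₁(x) Li_q(x) dx satisfy J(-2,1,q) = ζ(q+1) + J(-2,1,q-1) - J(-1,1,q-1). Furthermore, J(-2,1,1) = ∫₀¹ log²(1-x)/x² dx = 2ζ(2). -/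
open MeasureTheory

/-- The integral `J(m,p,q) = ∫₀¹ x^m Li_p(x) Li_q(x) dx` (with integer exponent `m`). -/
noncomputable def J (m : ℤ) (p q : ℤ) : ℝ := ∫ x in (0:ℝ)..1, x ^ m * Li p x * Li q x

open Finset Filter Topology
open scoped ENNReal NNReal


noncomputable def Hsum (c : ℕ) : ℝ := ∑ i ∈ Finset.range c, 1/(i+1 : ℝ)

lemma Hsum_succ (c : ℕ) : Hsum (c+1) = Hsum c + 1/(c+1 : ℝ) := by
  simp [Hsum, Finset.sum_range_succ]

-- partial sums of 1/(n+1)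
noncomputable def P (N : ℕ) : ℝ := ∑ n ∈ Finset.range N, 1/(n+1 : ℝ)

lemma P_add (N c : ℕ) : P (N + c) = P N + ∑ i ∈ Finset.range c, 1/((N:ℝ)+i+1) := by
  rw [P, Finset.sum_range_add, ← P]
  congr 1
  apply Finset.sum_congr rfl
  intro i _
  push_cast
  ring_nf

lemma tendsto_tail (c : ℕ) :
    Tendsto (fun N : ℕ => ∑ i ∈ Finset.range c, 1/((N:ℝ)+i+1)) atTop (𝓝 0) := by
  have : Tendsto (fun N : ℕ => ∑ i ∈ Finset.range c, 1/((N:ℝ)+i+1)) atTop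
      (𝓝 (∑ i ∈ Finset.range c, (0:ℝ))) := by
    apply tendsto_finset_sum
    intro i _
    have h1 : Tendsto (fun N : ℕ => ((N:ℝ)+i+1)) atTop atTop := by
      apply tendsto_atTop_add_const_right
      apply tendsto_atTop_add_const_right
      exact tendsto_natCast_atTop_atTop
    have h2 : Tendsto (fun N : ℕ => ((N:ℝ)+i+1)⁻¹) atTop (𝓝 0) := h1.inv_tendsto_atTop
    simpa using h2
  simpa using this

lemma hasSum_aux (c : ℕ) (hc : 0 < c) :
    HasSum (fun n : ℕ => 1/(((n:ℝ)+1)*((n:ℝ)+1+c))) (Hsum c / c) := by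
  rw [hasSum_iff_tendsto_nat_of_nonneg]
  · have key : ∀ N : ℕ, ∑ n ∈ Finset.range N, 1/(((n:ℝ)+1)*((n:ℝ)+1+c))
        = (P c + (P N - P (N + c))) / c := by
      intro N
      have hterm : ∀ n : ℕ, 1/(((n:ℝ)+1)*((n:ℝ)+1+c)) = (1/((n:ℝ)+1) - 1/((n:ℝ)+1+c))/c := by
        intro n
        have h1 : ((n:ℝ)+1) ≠ 0 := by positivity
        have h2 : ((n:ℝ)+1+c) ≠ 0 := by positivity
        have h3 : (c:ℝ) ≠ 0 := Nat.cast_ne_zero.2 hc.ne'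
        field_simp
        ring

      rw [Finset.sum_congr rfl fun n _ => hterm n, ← Finset.sum_div]
      congr 1
      rw [Finset.sum_sub_distrib]
      have h4 : ∑ n ∈ Finset.range N, 1/((n:ℝ)+1+c) = P (c + N) - P c := by
        rw [P_add c N]
        have : ∀ n : ℕ, ((c:ℝ)+n+1) = ((n:ℝ)+1+c) := by intro n; ring
        simp [this]
      rw [h4]
      have : P N = ∑ n ∈ Finset.range N, 1/((n:ℝ)+1) := rfl
      rw [← this, Nat.add_comm c N]
      ring
    have h0 : Tendsto (fun N => (P c + (P N - P (N + c))) / c) atTop (𝓝 ((P c + 0)/c)) := by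
      apply Tendsto.div_const
      apply tendsto_const_nhds.add
      have := tendsto_tail c
      have heq : (fun N : ℕ => P N - P (N+c)) = fun N : ℕ => -(∑ i ∈ Finset.range c, 1/((N:ℝ)+i+1)) := by
        funext N; rw [P_add]; ring
      rw [heq]
      simpa using this.neg
    simp only [key]
    simpa [P, Hsum] using h0
  · intro n; positivity


lemma hasSum_tele (i : ℕ) :
    HasSum (fun n : ℕ => 1/(((n:ℝ)+i+1)*((n:ℝ)+i+2))) (1/((i:ℝ)+1)) := by
  rw [hasSum_iff_tendsto_nat_of_nonneg]
  · have key : ∀ N : ℕ, ∑ n ∈ Finset.range N, 1/(((n:ℝ)+i+1)*((n:ℝ)+i+2))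
        = 1/((i:ℝ)+1) - 1/((N:ℝ)+i+1) := by
      intro N
      have hterm : ∀ n : ℕ, 1/(((n:ℝ)+i+1)*((n:ℝ)+i+2))
          = 1/((n:ℝ)+i+1) - 1/(((n:ℝ)+1)+i+1) := by
        intro n
        have h1 : ((n:ℝ)+i+1) ≠ 0 := by positivity
        have h2 : ((n:ℝ)+i+2) ≠ 0 := by positivity
        have : ((n:ℝ)+1)+i+1 = (n:ℝ)+i+2 := by ring
        rw [this]
        field_simp
        ring
      rw [Finset.sum_congr rfl fun n _ => hterm n]
      have := Finset.sum_range_sub' (f := fun n : ℕ => 1/((n:ℝ)+i+1)) N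
      simpa [Nat.cast_add] using this
    simp only [key]
    have h1 : Tendsto (fun N : ℕ => ((N:ℝ)+i+1)) atTop atTop := by
      apply tendsto_atTop_add_const_right
      apply tendsto_atTop_add_const_right
      exact tendsto_natCast_atTop_atTop
    have := h1.inv_tendsto_atTop
    have h2 : Tendsto (fun N : ℕ => 1/((i:ℝ)+1) - 1/((N:ℝ)+i+1)) atTop (𝓝 (1/((i:ℝ)+1) - 0)) := by
      apply tendsto_const_nhds.sub
      have h3 : Tendsto (fun N : ℕ => ((N:ℝ)+i+1)⁻¹) atTop (𝓝 0) := this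
      simpa [one_div] using h3
    simpa using h2
  · intro n; positivity

lemma hasSum_ite (i : ℕ) :
    HasSum (fun n : ℕ => if i ≤ n then 1/(((i:ℝ)+1)*((n:ℝ)+1)*((n:ℝ)+2)) else 0)
      (1/(((i:ℝ)+1)*((i:ℝ)+1))) := by
  set f : ℕ → ℝ := fun n => if i ≤ n then 1/(((i:ℝ)+1)*((n:ℝ)+1)*((n:ℝ)+2)) else 0 with hf
  have h := (hasSum_tele i).mul_left (1/((i:ℝ)+1))
  have e1 : (fun n : ℕ => f (n + i)) = fun n : ℕ => (1/((i:ℝ)+1)) * (1/(((n:ℝ)+i+1)*((n:ℝ)+i+2))) := by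
    funext n
    simp only [hf, if_pos (Nat.le_add_left i n)]
    push_cast
    rw [one_div_mul_eq_div, div_div, one_div, one_div]
    ring_nf
  rw [← e1] at h
  have h2 := (hasSum_nat_add_iff (f := f) i).mp h
  have e2 : ∑ j ∈ Finset.range i, f j = 0 := by
    apply Finset.sum_eq_zero
    intro j hj
    simp [hf, Nat.not_le.2 (Finset.mem_range.1 hj)]
  rw [e2, add_zero] at h2
  have e3 : 1/((i:ℝ)+1) * (1/((i:ℝ)+1)) = 1/(((i:ℝ)+1)*((i:ℝ)+1)) := by
    rw [div_mul_div_comm, one_mul]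
  rwa [e3] at h2


def eN : ℕ ≃ ℕ+ := Equiv.pnatEquivNat.symm

lemma eN_coe (n : ℕ) : ((eN n : ℕ+) : ℕ) = n + 1 := rfl

lemma hasSum_pnat_iff_eN (f : ℕ+ → ℝ) (a : ℝ) :
    HasSum f a ↔ HasSum (fun n : ℕ => f (eN n)) a := by
  rw [← Equiv.hasSum_iff eN]
  rfl

lemma summable_pnat_iff (f : ℕ+ → ℝ) :
    Summable f ↔ Summable (fun n : ℕ => f (eN n)) := by
  rw [← Equiv.summable_iff eN]
  rfl

lemma summable_one_div_pnat_pow {n : ℕ} (hn : 2 ≤ n) :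
    Summable (fun k : ℕ+ => 1 / ((k:ℕ) : ℝ) ^ n) := by
  rw [summable_pnat_iff]
  have h := (summable_nat_add_iff 1).2 (Real.summable_one_div_nat_pow.2 (show 1 < n by omega))
  have e : (fun m : ℕ => 1 / (((eN m : ℕ+):ℕ) : ℝ) ^ n) = fun m : ℕ => 1 / ((m:ℝ) + 1) ^ n := by
    funext m
    rw [eN_coe]
    push_cast
    ring_nf
  rw [e]
  apply h.congr
  intro m
  push_cast
  ring_nf

lemma hasSum_zetaR {n : ℕ} (hn : 2 ≤ n) :
    HasSum (fun k : ℕ+ => 1 / ((k:ℕ) : ℝ) ^ n) (zetaR n) :=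
  (summable_one_div_pnat_pow hn).hasSum

lemma zetaR_nonneg (n : ℕ) : 0 ≤ zetaR n :=
  tsum_nonneg fun k => by positivity

lemma zetaR_two_eq : HasSum (fun m : ℕ => 1/(((m:ℝ)+1)*((m:ℝ)+1))) (zetaR 2) := by
  have h := hasSum_zetaR (le_refl 2)
  rw [hasSum_pnat_iff_eN] at h
  have e : (fun m : ℕ => 1 / (((eN m : ℕ+):ℕ) : ℝ) ^ 2) = fun m : ℕ => 1/(((m:ℝ)+1)*((m:ℝ)+1)) := by
    funext m
    rw [eN_coe]
    push_cast
    ring_nf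
  rwa [e] at h


-- placeholders from previous files
----------------------------------------------------------------

noncomputable def Av (c : ℕ) : ℝ := if c = 0 then zetaR 2 else Hsum c / c

lemma Hsum_nonneg (c : ℕ) : 0 ≤ Hsum c := Finset.sum_nonneg fun i _ => by positivity

lemma Av_nonneg (c : ℕ) : 0 ≤ Av c := by
  unfold Av; split_ifs
  · exact zetaR_nonneg 2
  · exact div_nonneg (Hsum_nonneg _) (by positivity)

lemma hasSum_Av (c : ℕ) :
    HasSum (fun j : ℕ+ => 1/(((j:ℕ):ℝ)*(((j:ℕ):ℝ)+c))) (Av c) := by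
  rcases Nat.eq_zero_or_pos c with hc | hc
  · subst hc
    rw [hasSum_pnat_iff_eN]
    have h := zetaR_two_eq
    simp only [Av, if_pos rfl]
    have e' : (fun n : ℕ => 1/((((eN n : ℕ+):ℕ):ℝ)*((((eN n : ℕ+):ℕ):ℝ)+((0:ℕ):ℝ))))
        = (fun m : ℕ => 1/(((m:ℝ)+1)*((m:ℝ)+1))) := by
      funext m
      rw [eN_coe]
      push_cast
      congr 1
      ring
    rw [show (fun n : ℕ => (fun j : ℕ+ => 1/(((j:ℕ):ℝ)*(((j:ℕ):ℝ)+((0:ℕ):ℝ)))) (eN n)) = _ from e']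
    exact h
  · rw [hasSum_pnat_iff_eN]
    have h := hasSum_aux c hc
    rw [Av, if_neg hc.ne']
    have e' : (fun n : ℕ => 1/((((eN n : ℕ+):ℕ):ℝ)*((((eN n : ℕ+):ℕ):ℝ)+(c:ℝ))))
        = (fun n : ℕ => 1/(((n:ℝ)+1)*((n:ℝ)+1+c))) := by
      funext m
      rw [eN_coe]
      push_cast
      first
      | rfl
      | (congr 1; ring)
    rw [show (fun n : ℕ => (fun j : ℕ+ => 1/(((j:ℕ):ℝ)*(((j:ℕ):ℝ)+(c:ℝ)))) (eN n)) = _ from e']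
    exact h

noncomputable def termR (s q : ℕ) (k j : ℕ+) : ℝ :=
  1 / (((j:ℕ):ℝ) * ((k:ℕ):ℝ)^q * ((((k:ℕ) + (j:ℕ) - 1 + s) : ℕ) : ℝ))

lemma termR_nonneg (s q : ℕ) (k j : ℕ+) : 0 ≤ termR s q k j := by
  unfold termR; positivity

noncomputable def E (s q : ℕ) : ℝ≥0∞ := ∑' p : ℕ+ × ℕ+, ENNReal.ofReal (termR s q p.1 p.2)

noncomputable def Zeta (n : ℕ) : ℝ≥0∞ := ∑' k : ℕ+, ENNReal.ofReal (1/((k:ℕ):ℝ)^n)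

lemma hasSum_term (s q : ℕ) (k : ℕ+) :
    HasSum (fun j : ℕ+ => termR s q k j) (Av ((k:ℕ)-1+s) / ((k:ℕ):ℝ)^q) := by
  have h := (hasSum_Av ((k:ℕ)-1+s)).div_const (((k:ℕ):ℝ)^q)
  apply HasSum.congr_fun h
  intro j
  unfold termR
  have hk : 1 ≤ (k:ℕ) := k.one_le
  have hnat : (k:ℕ) + (j:ℕ) - 1 + s = (j:ℕ) + ((k:ℕ) - 1 + s) := by omega
  rw [hnat]
  have h1 : ((j:ℕ):ℝ) ≠ 0 := by positivity
  have h2 : ((k:ℕ):ℝ)^q ≠ 0 := by positivity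
  have h3 : (((j:ℕ) + ((k:ℕ) - 1 + s) : ℕ) : ℝ) = ((j:ℕ):ℝ) + (((k:ℕ)-1+s : ℕ):ℝ) := by
    push_cast; ring
  rw [h3]
  have h4 : ((j:ℕ):ℝ) + (((k:ℕ)-1+s : ℕ):ℝ) ≠ 0 := by positivity
  field_simp

lemma E_eq (s q : ℕ) :
    E s q = ∑' k : ℕ+, ENNReal.ofReal (Av ((k:ℕ)-1+s) / ((k:ℕ):ℝ)^q) := by
  rw [show E s q = ∑' p : ℕ+ × ℕ+, ENNReal.ofReal (termR s q p.1 p.2) from rfl, ENNReal.tsum_prod']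
  congr 1
  funext k
  rw [← (hasSum_term s q k).tsum_eq]
  exact (ENNReal.ofReal_tsum_of_nonneg (fun j => termR_nonneg s q k j)
    (hasSum_term s q k).summable).symm

lemma keyid (r : ℕ) (k : ℕ+) :
    Av ((k:ℕ)-1) / ((k:ℕ):ℝ)^(r+1) + Av ((k:ℕ)-1+1) / ((k:ℕ):ℝ)^r
      = 1/((k:ℕ):ℝ)^(r+2) + Av ((k:ℕ)-1) / ((k:ℕ):ℝ)^r := by
  obtain ⟨m, hk⟩ : ∃ m, (k:ℕ) = m + 1 := ⟨(k:ℕ)-1, by have := k.pos; omega⟩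
  have hc : (k:ℕ) - 1 = m := by omega
  rw [hc, hk]
  rcases Nat.eq_zero_or_pos m with hm0 | hm0
  · subst hm0
    simp [Av, Hsum]
    ring
  · have h1 : Av m = Hsum m / m := by rw [Av, if_neg hm0.ne']
    have h2 : Av (m+1) = Hsum (m+1) / ((m:ℝ)+1) := by
      rw [Av, if_neg (Nat.succ_ne_zero m)]
      push_cast
      ring
    rw [h1, h2, Hsum_succ]
    have hM : ((m:ℝ)) ≠ 0 := Nat.cast_ne_zero.2 hm0.ne'
    have hN : ((m:ℝ)+1) ≠ 0 := by positivity
    push_cast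
    rw [pow_succ, pow_succ, pow_succ]
    have hP : ((m:ℝ)+1)^r ≠ 0 := by positivity
    field_simp
    ring

lemma S2 (r : ℕ) : E 0 (r+1) + E 1 r = Zeta (r+2) + E 0 r := by
  rw [E_eq, E_eq, E_eq, Zeta, ← ENNReal.tsum_add, ← ENNReal.tsum_add]
  congr 1
  funext k
  have nn1 : 0 ≤ Av ((k:ℕ)-1+0) / ((k:ℕ):ℝ)^(r+1) :=
    div_nonneg (Av_nonneg _) (by positivity)
  have nn2 : 0 ≤ Av ((k:ℕ)-1+1) / ((k:ℕ):ℝ)^r :=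
    div_nonneg (Av_nonneg _) (by positivity)
  have nn3 : (0:ℝ) ≤ 1/((k:ℕ):ℝ)^(r+2) := by positivity
  rw [← ENNReal.ofReal_add nn1 nn2, ← ENNReal.ofReal_add nn3 (div_nonneg (Av_nonneg _) (by positivity))]
  congr 1
  have := keyid r k
  simpa using this

lemma F3 : (∑' n : ℕ, ENNReal.ofReal (Hsum (n+1)/(((n:ℝ)+1)*((n:ℝ)+2)))) = ENNReal.ofReal (zetaR 2) := by
  classical
  have step1 : ∀ n : ℕ, ENNReal.ofReal (Hsum (n+1)/(((n:ℝ)+1)*((n:ℝ)+2)))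
      = ∑' i : ℕ, (if i ≤ n then ENNReal.ofReal (1/(((i:ℝ)+1)*((n:ℝ)+1)*((n:ℝ)+2))) else 0) := by
    intro n
    have hsplit : Hsum (n+1)/(((n:ℝ)+1)*((n:ℝ)+2))
        = ∑ i ∈ Finset.range (n+1), 1/(((i:ℝ)+1)*((n:ℝ)+1)*((n:ℝ)+2)) := by
      rw [Hsum, Finset.sum_div]
      apply Finset.sum_congr rfl
      intro i _
      rw [div_div, mul_assoc]
    rw [hsplit, ENNReal.ofReal_sum_of_nonneg (fun i _ => by positivity)]
    rw [tsum_eq_sum (s := Finset.range (n+1))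
      (fun i hi => if_neg (fun h => hi (Finset.mem_range.2 (by omega))))]
    exact Finset.sum_congr rfl fun i hi =>
      (if_pos (Nat.lt_succ_iff.mp (Finset.mem_range.1 hi))).symm
  simp only [step1]
  rw [ENNReal.tsum_comm]
  have step3 : ∀ i : ℕ, (∑' n : ℕ, (if i ≤ n then ENNReal.ofReal (1/(((i:ℝ)+1)*((n:ℝ)+1)*((n:ℝ)+2))) else 0))
      = ENNReal.ofReal (1/(((i:ℝ)+1)*((i:ℝ)+1))) := by
    intro i
    have hW : ∀ n : ℕ, (if i ≤ n then ENNReal.ofReal (1/(((i:ℝ)+1)*((n:ℝ)+1)*((n:ℝ)+2))) else 0)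
        = ENNReal.ofReal (if i ≤ n then 1/(((i:ℝ)+1)*((n:ℝ)+1)*((n:ℝ)+2)) else 0) := by
      intro n; split_ifs <;> simp
    simp only [hW]
    rw [← ENNReal.ofReal_tsum_of_nonneg]
    · rw [(hasSum_ite i).tsum_eq]
    · intro n; split_ifs <;> positivity
    · exact (hasSum_ite i).summable
  simp only [step3]
  rw [← ENNReal.ofReal_tsum_of_nonneg (fun i => by positivity) zetaR_two_eq.summable,
    zetaR_two_eq.tsum_eq]

lemma S1 : E 0 1 = ENNReal.ofReal (2 * zetaR 2) := by
  rw [E_eq]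
  rw [← Equiv.tsum_eq eN]
  have hfun : ∀ n : ℕ, ENNReal.ofReal (Av (((eN n : ℕ+):ℕ)-1+0) / (((eN n :ℕ+):ℕ):ℝ)^1)
      = ENNReal.ofReal (Av n / ((n:ℝ)+1)) := by
    intro n
    rw [eN_coe]
    norm_num
  rw [show (fun n : ℕ => ENNReal.ofReal (Av (((eN n : ℕ+):ℕ)-1+0) / (((eN n :ℕ+):ℕ):ℝ)^1)) = _ from funext hfun]
  rw [tsum_eq_zero_add' ENNReal.summable]
  have h0 : ENNReal.ofReal (Av 0 / (((0:ℕ):ℝ)+1)) = ENNReal.ofReal (zetaR 2) := by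
    rw [Av]; norm_num
  have h1 : ∀ n : ℕ, ENNReal.ofReal (Av (n+1) / (((n+1:ℕ):ℝ)+1))
      = ENNReal.ofReal (Hsum (n+1)/(((n:ℝ)+1)*((n:ℝ)+2))) := by
    intro n
    rw [Av, if_neg (Nat.succ_ne_zero n)]
    congr 1
    push_cast
    rw [div_div]
    ring_nf
  rw [show (fun n : ℕ => ENNReal.ofReal (Av (n+1) / (((n+1:ℕ):ℝ)+1))) = _ from funext h1]
  rw [F3, h0, ← ENNReal.ofReal_add (zetaR_nonneg 2) (zetaR_nonneg 2)]
  congr 1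
  ring

lemma termR_le (s q : ℕ) (hq : 1 ≤ q) (k j : ℕ+) : termR s q k j ≤ termR 0 1 k j := by
  unfold termR
  have hk1 : (1:ℝ) ≤ ((k:ℕ):ℝ) := Nat.one_le_cast.2 k.one_le
  have hd0 : (0:ℝ) < ((((k:ℕ) + (j:ℕ) - 1 + 0) : ℕ) : ℝ) := by
    have : 0 < (k:ℕ) + (j:ℕ) - 1 + 0 := by have := k.pos; have := j.pos; omega
    exact_mod_cast Nat.cast_pos.2 this
  have hj : (0:ℝ) < ((j:ℕ):ℝ) := Nat.cast_pos.2 j.pos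
  apply one_div_le_one_div_of_le
  · apply mul_pos (mul_pos hj (by positivity)) hd0
  · apply mul_le_mul
    · exact mul_le_mul le_rfl (pow_le_pow_right₀ hk1 hq) (by positivity) (le_of_lt hj)
    · exact Nat.cast_le.2 (by omega)
    · exact le_of_lt hd0
    · positivity

lemma E_le (s q : ℕ) (hq : 1 ≤ q) : E s q ≤ E 0 1 :=
  ENNReal.tsum_le_tsum fun p => ENNReal.ofReal_le_ofReal (termR_le s q hq p.1 p.2)

lemma E_ne_top (s q : ℕ) (hq : 1 ≤ q) : E s q ≠ ⊤ := by
  apply ne_top_of_le_ne_top _ (E_le s q hq)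
  rw [S1]
  exact ENNReal.ofReal_ne_top

lemma Zeta_eq (n : ℕ) (hn : 2 ≤ n) : Zeta n = ENNReal.ofReal (zetaR n) := by
  rw [Zeta, ← ENNReal.ofReal_tsum_of_nonneg (fun k => by positivity)
    (summable_one_div_pnat_pow hn)]
  rfl

lemma E_toReal (s q : ℕ) : (E s q).toReal = ∑' p : ℕ+ × ℕ+, termR s q p.1 p.2 := by
  rw [show E s q = ∑' p : ℕ+ × ℕ+, ENNReal.ofReal (termR s q p.1 p.2) from rfl,
    ENNReal.tsum_toReal_eq (fun p => ENNReal.ofReal_ne_top)]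
  congr 1
  funext p
  exact ENNReal.toReal_ofReal (termR_nonneg s q p.1 p.2)


noncomputable def fmon (s q : ℕ) (p : ℕ+ × ℕ+) : ℝ → ℝ :=
  fun x => x ^ (((p.1:ℕ) + (p.2:ℕ)) - 2 + s) / (((p.2:ℕ):ℝ) * ((p.1:ℕ):ℝ)^q)

lemma summable_geom_pnat {x : ℝ} (hx0 : 0 < x) (hx1 : x < 1) :
    Summable (fun j : ℕ+ => x ^ (j:ℕ)) := by
  rw [summable_pnat_iff]
  have h : Summable (fun n : ℕ => x ^ n) := summable_geometric_of_lt_one hx0.le hx1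
  apply (h.mul_left x).congr
  intro n
  rw [eN_coe, pow_succ]
  ring

lemma summable_pow_div {x : ℝ} (hx0 : 0 < x) (hx1 : x < 1) (q : ℕ) :
    Summable (fun j : ℕ+ => ‖x ^ (j:ℕ) / ((j:ℕ):ℝ)^q‖) := by
  apply Summable.of_nonneg_of_le (fun j => norm_nonneg _) _ (summable_geom_pnat hx0 hx1)
  intro j
  rw [Real.norm_eq_abs, abs_of_nonneg (by positivity)]
  have h1 : (1:ℝ) ≤ ((j:ℕ):ℝ)^q := by apply one_le_pow₀; exact_mod_cast j.one_le
  calc x ^ (j:ℕ) / ((j:ℕ):ℝ)^q ≤ x ^ (j:ℕ) / 1 := by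
        apply div_le_div_of_nonneg_left (by positivity) (by norm_num) h1
    _ = x ^ (j:ℕ) := by ring

lemma pointwise_eq {x : ℝ} (hx : x ∈ Set.Ioo (0:ℝ) 1) (s q : ℕ) :
    x ^ ((s:ℤ) - 2) * Li 1 x * Li (q:ℤ) x = ∑' p : ℕ+ × ℕ+, fmon s q p x := by
  obtain ⟨hx0, hx1⟩ := hx
  have hLi1 : Li 1 x = ∑' j : ℕ+, x ^ (j:ℕ) / ((j:ℕ):ℝ) := by
    unfold Li
    congr 1; funext j; rw [zpow_one]
  have hLiq : Li (q:ℤ) x = ∑' k : ℕ+, x ^ (k:ℕ) / ((k:ℕ):ℝ)^q := by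
    simp [Li, zpow_natCast]
  have hprod : Li (q:ℤ) x * Li 1 x
      = ∑' p : ℕ+ × ℕ+, (x ^ ((p.1:ℕ)) / ((p.1:ℕ):ℝ)^q) * (x ^ ((p.2:ℕ)) / ((p.2:ℕ):ℝ)) := by
    rw [hLiq, hLi1]
    have h1 := summable_pow_div hx0 hx1 q
    have h2 := summable_pow_div hx0 hx1 1
    have h2' : Summable (fun j : ℕ+ => ‖x ^ (j:ℕ) / ((j:ℕ):ℝ)‖) := by
      apply h2.congr; intro j; rw [pow_one]
    exact tsum_mul_tsum_of_summable_norm h1 h2'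
  rw [mul_assoc, mul_comm (Li 1 x), hprod, ← tsum_mul_left]
  congr 1
  funext p
  unfold fmon
  have hxne : x ≠ 0 := hx0.ne'
  have hexp : x ^ ((s:ℤ) - 2) * x ^ ((p.1:ℕ) + (p.2:ℕ))
      = x ^ (((p.1:ℕ) + (p.2:ℕ)) - 2 + s) := by
    rw [← zpow_natCast x ((p.1:ℕ) + (p.2:ℕ)), ← zpow_natCast x (((p.1:ℕ) + (p.2:ℕ)) - 2 + s),
      ← zpow_add₀ hxne]
    congr 1
    have h1 := p.1.pos
    have h2 := p.2.pos
    push_cast [Nat.cast_sub (show 2 ≤ (p.1:ℕ) + (p.2:ℕ) by omega)]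
    ring
  calc x ^ ((s:ℤ) - 2) * ((x ^ ((p.1:ℕ)) / ((p.1:ℕ):ℝ)^q) * (x ^ ((p.2:ℕ)) / ((p.2:ℕ):ℝ)))
      = (x ^ ((s:ℤ) - 2) * x ^ ((p.1:ℕ) + (p.2:ℕ))) / (((p.2:ℕ):ℝ) * ((p.1:ℕ):ℝ)^q) := by
        rw [pow_add]
        ring
    _ = x ^ (((p.1:ℕ) + (p.2:ℕ)) - 2 + s) / (((p.2:ℕ):ℝ) * ((p.1:ℕ):ℝ)^q) := by rw [hexp]

lemma continuous_fmon (s q : ℕ) (p : ℕ+ × ℕ+) : Continuous (fmon s q p) := by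
  unfold fmon
  exact (continuous_pow _).div_const _

lemma integrableOn_fmon (s q : ℕ) (p : ℕ+ × ℕ+) :
    IntegrableOn (fmon s q p) (Set.Ioo (0:ℝ) 1) volume :=
  ((continuous_fmon s q p).integrableOn_Icc (a := 0) (b := 1)).mono_set Set.Ioo_subset_Icc_self

lemma int_pow_Ioo (n : ℕ) : ∫ x in Set.Ioo (0:ℝ) 1, x ^ n = 1/((n:ℝ)+1) := by
  rw [← MeasureTheory.integral_Ioc_eq_integral_Ioo,
    ← intervalIntegral.integral_of_le (by norm_num : (0:ℝ) ≤ 1), integral_pow]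
  push_cast
  norm_num

lemma int_fmon (s q : ℕ) (p : ℕ+ × ℕ+) :
    ∫ x in Set.Ioo (0:ℝ) 1, fmon s q p x = termR s q p.1 p.2 := by
  unfold fmon
  rw [integral_div, int_pow_Ioo, termR]
  have h1 := p.1.pos
  have h2 := p.2.pos
  have hn : ((p.1:ℕ) + (p.2:ℕ)) - 2 + s + 1 = (p.1:ℕ) + (p.2:ℕ) - 1 + s := by omega
  have hcast : ((((p.1:ℕ) + (p.2:ℕ)) - 2 + s : ℕ) : ℝ) + 1
      = (((p.1:ℕ) + (p.2:ℕ) - 1 + s : ℕ) : ℝ) := by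
    rw [← hn]; push_cast; ring
  rw [hcast]
  have ha : (0:ℝ) < (((p.1:ℕ) + (p.2:ℕ) - 1 + s : ℕ) : ℝ) := by
    have : 0 < (p.1:ℕ) + (p.2:ℕ) - 1 + s := by omega
    exact_mod_cast this
  have hb : (0:ℝ) < ((p.2:ℕ):ℝ) := by exact_mod_cast h2
  have hc : (0:ℝ) < ((p.1:ℕ):ℝ)^q := by
    have : (0:ℝ) < ((p.1:ℕ):ℝ) := by exact_mod_cast h1
    positivity
  field_simp

lemma lint_fmon (s q : ℕ) (p : ℕ+ × ℕ+) :
    ∫⁻ x in Set.Ioo (0:ℝ) 1, ‖fmon s q p x‖₊ = ENNReal.ofReal (termR s q p.1 p.2) := by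
  have hnn : 0 ≤ᵐ[volume.restrict (Set.Ioo (0:ℝ) 1)] fmon s q p := by
    filter_upwards [ae_restrict_mem measurableSet_Ioo] with x hx
    have : (0:ℝ) < x := hx.1
    unfold fmon
    positivity
  rw [← int_fmon s q p, MeasureTheory.ofReal_integral_eq_lintegral_ofReal
    (integrableOn_fmon s q p) hnn]
  apply lintegral_congr_ae
  filter_upwards [hnn] with x hx
  rw [← Real.enorm_eq_ofReal hx]
  exact (enorm_eq_nnnorm _).symm

lemma J_eq (s q : ℕ) (hq : 1 ≤ q) : J ((s:ℤ) - 2) 1 (q:ℤ) = (E s q).toReal := by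
  rw [J, intervalIntegral.integral_of_le (by norm_num : (0:ℝ) ≤ 1),
    MeasureTheory.integral_Ioc_eq_integral_Ioo]
  rw [setIntegral_congr_fun measurableSet_Ioo
    (fun x hx => pointwise_eq hx s q)]
  rw [MeasureTheory.integral_tsum
    (fun p => ((continuous_fmon s q p).aestronglyMeasurable).restrict)
    (by
      rw [show (∑' p : ℕ+ × ℕ+, ∫⁻ x in Set.Ioo (0:ℝ) 1, ‖fmon s q p x‖ₑ)
          = E s q from by
        rw [E]; congr 1; funext p; exact lint_fmon s q p]
      exact E_ne_top s q hq)]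
  rw [E_toReal]
  congr 1
  funext p
  exact int_fmon s q p


/-- For every integer `q ≥ 2`, the integrals `J(-2,1,q)` satisfy
`J(-2,1,q) = ζ(q+1) + J(-2,1,q-1) - J(-1,1,q-1)`; furthermore `J(-2,1,1) = 2ζ(2)`. -/
theorem stmt13 (q : ℕ) (hq : 2 ≤ q) :
    J (-2) 1 q = zetaR (q + 1) + J (-2) 1 ((q : ℤ) - 1) - J (-1) 1 ((q : ℤ) - 1)
      ∧ J (-2) 1 1 = 2 * zetaR 2 := by
  have part2 : J (-2) 1 1 = 2 * zetaR 2 := by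
    have h := J_eq 0 1 le_rfl
    norm_num at h
    rw [h, S1, ENNReal.toReal_ofReal (by
      have := zetaR_nonneg 2
      linarith)]
  refine ⟨?_, part2⟩
  obtain ⟨r, hrq⟩ : ∃ r, q = r + 1 := ⟨q - 1, by omega⟩
  have hr1 : 1 ≤ r := by omega
  have key := S2 r
  have hA : (E 0 (r+1)).toReal + (E 1 r).toReal = (Zeta (r+2)).toReal + (E 0 r).toReal := by
    rw [← ENNReal.toReal_add (E_ne_top 0 (r+1) (by omega)) (E_ne_top 1 r hr1),
      ← ENNReal.toReal_add (by rw [Zeta_eq (r+2) (by omega)]; exact ENNReal.ofReal_ne_top)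
        (E_ne_top 0 r hr1), key]
  have hZ : (Zeta (r+2)).toReal = zetaR (r+2) := by
    rw [Zeta_eq (r+2) (by omega)]
    exact ENNReal.toReal_ofReal (zetaR_nonneg _)
  have h1 : J (-2) 1 (q:ℤ) = (E 0 q).toReal := by
    have h := J_eq 0 q (by omega)
    norm_num at h
    exact h
  have h2 : J (-2) 1 ((q:ℤ) - 1) = (E 0 r).toReal := by
    have h := J_eq 0 r hr1
    norm_num at h
    have hc : ((r:ℤ)) = (q:ℤ) - 1 := by omega
    rwa [hc] at h
  have h3 : J (-1) 1 ((q:ℤ) - 1) = (E 1 r).toReal := by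
    have h := J_eq 1 r hr1
    norm_num at h
    have hc : ((r:ℤ)) = (q:ℤ) - 1 := by omega
    rwa [hc] at h
  have hq1 : q + 1 = r + 2 := by omega
  rw [h1, h2, h3, hq1, ← hZ, hrq]
  linarith [hA]
end
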